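/- Let w : ℝ^d → [0,∞) belong to W_p. Then there exist positive constants δ₁, δ₂, δ₃ such that inf over |z| > δ₃ of ∫_{|u| ≤ δ₁} (w(u - z) - w(u)) du > δ₂. -/

import Mathlib

open MeasureTheory Filter

/-- For `w ∈ W_p`, there are `δ₁, δ₂, δ₃ > 0` with
`inf_{‖z‖ > δ₃} ∫_{‖u‖ ≤ δ₁} (w (u - z) - w u) du > δ₂`. -/
theorem stmt_3 (d : ℕ) (hd : 0 < d) (p : ℝ) (hp : 0 < p)
    (w : EuclideanSpace ℝ (Fin d) → ℝ) (hnonneg : ∀ u, 0 ≤ w u)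
    (hmeas : Measurable w)
    (h0 : w 0 = 0) (hcont : ContinuousAt w 0) (hnontriv : ¬ ∀ u, w u = 0)
    (hsymm : ∀ u, w (-u) = w u)
    (hconv : ∀ c : ℝ, 0 < c → Convex ℝ {u | w u < c})
    (hbdd : ∃ c₀ : ℝ, 0 < c₀ ∧ ∀ c : ℝ, 0 < c → c ≤ c₀ → Bornology.IsBounded {u | w u < c})
    (hgrowth : ∃ C : ℝ, 0 < C ∧ ∀ u, w u ≤ C * (1 + ‖u‖ ^ p)) :
    ∃ δ₁ δ₂ δ₃ : ℝ, 0 < δ₁ ∧ 0 < δ₂ ∧ 0 < δ₃ ∧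
      ∀ z : EuclideanSpace ℝ (Fin d), δ₃ < ‖z‖ →
        δ₂ < ∫ u in Metric.closedBall (0 : EuclideanSpace ℝ (Fin d)) δ₁,
          (w (u - z) - w u) := by
  obtain ⟨c₀, hc₀, hb⟩ := hbdd
  obtain ⟨C, hC, hg⟩ := hgrowth
  -- the sublevel set is bounded
  obtain ⟨R, hR⟩ := (hb c₀ hc₀ le_rfl).subset_closedBall 0
  -- continuity at 0 gives a small ball where w < c₀/4
  obtain ⟨δ, hδ, hδw⟩ := Metric.continuousAt_iff.mp hcont (c₀ / 4) (by positivity)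
  set δ₁ := δ / 2 with hδ₁def
  have hδ₁ : 0 < δ₁ := by positivity
  have hsmall : ∀ u ∈ Metric.closedBall (0 : EuclideanSpace ℝ (Fin d)) δ₁,
      w u < c₀ / 4 := by
    intro u hu
    have : dist u 0 < δ := lt_of_le_of_lt (Metric.mem_closedBall.mp hu) (by linarith)
    have := hδw this
    rw [h0, dist_zero_right, Real.norm_eq_abs, abs_of_nonneg (hnonneg u)] at this
    exact this
  set B := Metric.closedBall (0 : EuclideanSpace ℝ (Fin d)) δ₁ with hBdef
  have hBmeas : MeasurableSet B := Metric.isClosed_closedBall.measurableSet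
  have hBfin : volume B ≠ ⊤ := (Metric.isBounded_closedBall).measure_lt_top.ne
  have hVpos : 0 < (volume B).toReal := by
    refine ENNReal.toReal_pos ?_ hBfin
    exact (Metric.measure_closedBall_pos volume _ hδ₁).ne'
  set V := (volume B).toReal with hVdef
  refine ⟨δ₁, (c₀ / 2) * V, max R 0 + δ₁ + 1, hδ₁, by positivity, by positivity, ?_⟩
  intro z hz
  -- pointwise lower bound on the ball
  have hlow : ∀ u ∈ B, 3 * c₀ / 4 ≤ w (u - z) - w u := by
    intro u hu
    have hu' : ‖u‖ ≤ δ₁ := by simpa [dist_zero_right] using Metric.mem_closedBall.mp hu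
    have hz' : max R 0 < ‖u - z‖ := by
      have h1 : ‖z‖ ≤ ‖u - z‖ + ‖u‖ := by
        calc ‖z‖ = ‖(z - u) + u‖ := by rw [sub_add_cancel]
          _ ≤ ‖z - u‖ + ‖u‖ := norm_add_le _ _
          _ = ‖u - z‖ + ‖u‖ := by rw [norm_sub_rev]
      linarith
    have hwz : c₀ ≤ w (u - z) := by
      by_contra h
      push_neg at h
      have : u - z ∈ {v | w v < c₀} := h
      have := hR this
      rw [Metric.mem_closedBall, dist_zero_right] at this
      exact absurd this (not_le.mpr (lt_of_le_of_lt (le_max_left R 0) hz'))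
    have := hsmall u hu
    linarith
  -- integrability
  have hmz : Measurable (fun u : EuclideanSpace ℝ (Fin d) => w (u - z)) :=
    hmeas.comp (measurable_id.sub measurable_const)
  have hbound : ∀ (y : EuclideanSpace ℝ (Fin d)) (r : ℝ), ‖y‖ ≤ r →
      ‖w y‖ ≤ C * (1 + (max r 0) ^ p) := by
    intro y r hy
    rw [Real.norm_eq_abs, abs_of_nonneg (hnonneg y)]
    refine (hg y).trans ?_
    have : ‖y‖ ^ p ≤ (max r 0) ^ p :=
      Real.rpow_le_rpow (norm_nonneg y) (hy.trans (le_max_left r 0)) hp.le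
    nlinarith
  have hint1 : IntegrableOn (fun u => w (u - z)) B volume := by
    refine Measure.integrableOn_of_bounded hBfin hmz.aestronglyMeasurable
      (M := C * (1 + (max (δ₁ + ‖z‖) 0) ^ p)) ?_
    filter_upwards [ae_restrict_mem hBmeas] with u hu
    have hu' : ‖u‖ ≤ δ₁ := by simpa [dist_zero_right] using Metric.mem_closedBall.mp hu
    exact hbound _ _ ((norm_sub_le u z).trans (by linarith))
  have hint2 : IntegrableOn w B volume := by
    refine Measure.integrableOn_of_bounded hBfin hmeas.aestronglyMeasurable
      (M := C * (1 + (max δ₁ 0) ^ p)) ?_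
    filter_upwards [ae_restrict_mem hBmeas] with u hu
    exact hbound _ _ (by simpa [dist_zero_right] using Metric.mem_closedBall.mp hu)
  have hint : IntegrableOn (fun u => w (u - z) - w u) B volume := hint1.sub hint2
  have key := setIntegral_ge_of_const_le (c := 3 * c₀ / 4) hBmeas hBfin hlow hint
  calc (c₀ / 2) * V < (3 * c₀ / 4) * V := by nlinarith
    _ ≤ _ := by rw [smul_eq_mul, mul_comm] at key; exact key
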